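/- The coalition number of the Petersen graph is at least 6: the partition π = {{1}, {7,3}, {2}, {8,4}, {5,6}, {9,10}} of the vertex set (using the labeling where the Petersen graph has outer cycle 1-2-3-4-5-1, inner pentagram 6-8-10-7-9-6, and spokes {i, i+5}) is a coalition partition with 6 classes. -/
import Mathlib
set_option maxRecDepth 4000

open Finset

/-- `S` is a dominating set of `G`: every vertex outside `S` has a neighbor in `S`. -/
def Dominates {V : Type*} (G : SimpleGraph V) (S : Finset V) : Prop :=
  ∀ v ∉ S, ∃ u ∈ S, G.Adj u v

/-- Two disjoint non-dominating sets whose union dominates form a coalition. -/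
def FormsCoalition {V : Type*} [DecidableEq V] (G : SimpleGraph V) (X Y : Finset V) : Prop :=
  ¬ Dominates G X ∧ ¬ Dominates G Y ∧ Dominates G (X ∪ Y)

/-- A coalition partition: every class is a singleton dominating set, or is a
non-dominating set forming a coalition with another class. -/
def IsCoalitionPartition {V : Type*} [Fintype V] [DecidableEq V] (G : SimpleGraph V)
    (π : Finpartition (univ : Finset V)) : Prop :=
  ∀ X ∈ π.parts, (X.card = 1 ∧ Dominates G X) ∨
    (¬ Dominates G X ∧ ∃ Y ∈ π.parts, Y ≠ X ∧ ¬ Dominates G Y ∧ Dominates G (X ∪ Y))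

/-- The coalition number: the maximum order of a coalition partition. -/
noncomputable def coalitionNumber (V : Type*) [Fintype V] [DecidableEq V]
    (G : SimpleGraph V) : ℕ :=
  sSup {k | ∃ π : Finpartition (univ : Finset V), IsCoalitionPartition G π ∧ π.parts.card = k}

def petersen : SimpleGraph (Fin 10) :=
  SimpleGraph.fromRel (fun a b => (a.val, b.val) ∈
    [(0,1),(1,2),(2,3),(3,4),(4,0),(0,5),(1,6),(2,7),(3,8),(4,9),(5,7),(7,9),(9,6),(6,8),(8,5)])

def myParts : Finset (Finset (Fin 10)) := {{0}, {6, 2}, {1}, {7, 3}, {4, 5}, {8, 9}}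

def myPart : Finpartition (univ : Finset (Fin 10)) where
  parts := myParts
  supIndep := by decide
  sup_parts := by decide
  bot_notMem := by decide

instance : DecidableRel petersen.Adj := fun a b =>
  decidable_of_iff _ (SimpleGraph.fromRel_adj _ a b).symm

lemma dom_union_1 : Dominates petersen ({0} ∪ {6,2}) := by
  unfold Dominates; decide
lemma dom_union_2 : Dominates petersen ({1} ∪ {7,3}) := by
  unfold Dominates; decide
lemma dom_union_3 : Dominates petersen ({4,5} ∪ {6,2}) := by
  unfold Dominates; decide
lemma dom_union_4 : Dominates petersen ({8,9} ∪ {1}) := by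
  unfold Dominates; decide
lemma ndom_0 : ¬ Dominates petersen {0} := by unfold Dominates; decide
lemma ndom_62 : ¬ Dominates petersen {6,2} := by unfold Dominates; decide
lemma ndom_1 : ¬ Dominates petersen {1} := by unfold Dominates; decide
lemma ndom_73 : ¬ Dominates petersen {7,3} := by unfold Dominates; decide
lemma ndom_45 : ¬ Dominates petersen {4,5} := by unfold Dominates; decide
lemma ndom_89 : ¬ Dominates petersen {8,9} := by unfold Dominates; decide

lemma hcp : IsCoalitionPartition petersen myPart := by
  intro X hX
  have hX' : X = {0} ∨ X = {6,2} ∨ X = {1} ∨ X = {7,3} ∨ X = {4,5} ∨ X = {8,9} := by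
    simpa [myPart, myParts] using hX
  have m1 : ({0} : Finset (Fin 10)) ∈ myPart.parts := by decide
  have m2 : ({6,2} : Finset (Fin 10)) ∈ myPart.parts := by decide
  have m3 : ({1} : Finset (Fin 10)) ∈ myPart.parts := by decide
  have m4 : ({7,3} : Finset (Fin 10)) ∈ myPart.parts := by decide
  have m5 : ({4,5} : Finset (Fin 10)) ∈ myPart.parts := by decide
  have m6 : ({8,9} : Finset (Fin 10)) ∈ myPart.parts := by decide
  rcases hX' with rfl | rfl | rfl | rfl | rfl | rfl
  · exact Or.inr ⟨ndom_0, {6,2}, m2, by decide, ndom_62, dom_union_1⟩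
  · exact Or.inr ⟨ndom_62, {0}, m1, by decide, ndom_0, by rw [Finset.union_comm]; exact dom_union_1⟩
  · exact Or.inr ⟨ndom_1, {7,3}, m4, by decide, ndom_73, dom_union_2⟩
  · exact Or.inr ⟨ndom_73, {1}, m3, by decide, ndom_1, by rw [Finset.union_comm]; exact dom_union_2⟩
  · exact Or.inr ⟨ndom_45, {6,2}, m2, by decide, ndom_62, dom_union_3⟩
  · exact Or.inr ⟨ndom_89, {1}, m3, by decide, ndom_1, dom_union_4⟩

theorem stmt11 :
    (∃ π : Finpartition (univ : Finset (Fin 10)),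
      π.parts = ({{0}, {6, 2}, {1}, {7, 3}, {4, 5}, {8, 9}} : Finset (Finset (Fin 10))) ∧
      IsCoalitionPartition petersen π ∧ π.parts.card = 6) ∧
    6 ≤ coalitionNumber (Fin 10) petersen := by
  have h6 : myPart.parts.card = 6 := by decide
  refine ⟨⟨myPart, rfl, hcp, h6⟩, ?_⟩
  apply le_csSup
  · refine ⟨2 ^ 10, ?_⟩
    rintro k ⟨π, -, rfl⟩
    calc π.parts.card ≤ (univ.powerset : Finset (Finset (Fin 10))).card :=
          Finset.card_le_card (fun X hX => by
            simp [Finset.mem_powerset, π.le hX])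
      _ = 2 ^ 10 := by simp
  · exact ⟨myPart, hcp, h6⟩
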